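/- arXiv:2001.11111 — 2 statements merged into one kernel-verified Lean document; each statement's English description precedes it below -/
import Mathlib

section
/- Let $\Psi: \mathcal{X} \times \mathbb{R}^d \to \mathbb{R}$ be twice continuously differentiable in $\theta$, and let $x_1, \dots, x_n, x_1'$ be points such that the Hessians satisfy $\lambda_{\min}(\partial^2_\theta \Psi(x_i, \theta)) \ge \delta > 0$ for all $\theta$ and all $i$, and also for $x_1'$. Let $\hat\theta$ minimize $\sum_{i=1}^n \Psi(x_i, \theta)$ and $\hat\theta^1$ minimize $\Psi(x_1', \theta) + \sum_{i=2}^n \Psi(x_i, \theta)$. Then $\|\hat\theta - \hat\theta^1\|_2 \le \frac{1}{n\delta} \|\partial_\theta \Psi(x_1, \hat\theta^1) - \partial_\theta \Psi(x_1', \hat\theta^1)\|_2$. -/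
open scoped RealInnerProductSpace

section Aux

variable {E : Type*} [NormedAddCommGroup E] [InnerProductSpace ℝ E] [CompleteSpace E]

lemma gradient_eq_toDual_symm_fderiv (f : E → ℝ) (θ : E) :
    gradient f θ = (InnerProductSpace.toDual ℝ E).symm (fderiv ℝ f θ) := rfl

lemma contDiff_gradient_of_contDiff_two {f : E → ℝ} (hf : ContDiff ℝ 2 f) :
    ContDiff ℝ 1 (gradient f) := by
  have h1 : ContDiff ℝ 1 (fderiv ℝ f) := hf.fderiv_right (by norm_num)
  exact ((InnerProductSpace.toDual ℝ E).symm.contDiff).comp h1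

lemma gradient_sum {ι : Type*} (s : Finset ι) (f : ι → E → ℝ) (θ : E)
    (hf : ∀ i ∈ s, DifferentiableAt ℝ (f i) θ) :
    gradient (fun θ => ∑ i ∈ s, f i θ) θ = ∑ i ∈ s, gradient (f i) θ := by
  simp only [gradient_eq_toDual_symm_fderiv]
  rw [fderiv_fun_sum hf, map_sum]

lemma gradient_add (f g : E → ℝ) (θ : E) (hf : DifferentiableAt ℝ f θ)
    (hg : DifferentiableAt ℝ g θ) :
    gradient (fun θ => f θ + g θ) θ = gradient f θ + gradient g θ := by
  simp only [gradient_eq_toDual_symm_fderiv]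
  rw [fderiv_fun_add hf hg, map_add]

lemma gradient_eq_zero_of_isMinOn {f : E → ℝ} {θ : E}
    (h : IsMinOn f Set.univ θ) : gradient f θ = 0 := by
  rw [gradient_eq_toDual_symm_fderiv, (h.isLocalMin Filter.univ_mem).fderiv_eq_zero]
  simp

end Aux

/-- Deterministic replace-one stability of M-estimators: if every summand has Hessian bounded
below by `δ > 0`, and `θ̂`, `θ̂¹` are the minimizers of the empirical risks before and after
replacing the first data point, then
`‖θ̂ - θ̂¹‖ ≤ (1/(nδ)) ‖∂_θΨ(x₁, θ̂¹) - ∂_θΨ(x₁', θ̂¹)‖`. -/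
theorem m_estimator_replace_one_stability {𝓧 : Type*} {d n : ℕ} [NeZero n]
    (δ : ℝ) (hδ : 0 < δ)
    (Ψ : 𝓧 → EuclideanSpace ℝ (Fin d) → ℝ)
    (x : Fin n → 𝓧) (x' : 𝓧)
    (hsmooth : ∀ y : 𝓧, y ∈ Set.range x ∪ {x'} → ContDiff ℝ 2 (Ψ y))
    (hhess : ∀ y : 𝓧, y ∈ Set.range x ∪ {x'} →
      ∀ θ v : EuclideanSpace ℝ (Fin d),
        δ * ‖v‖ ^ 2 ≤ ⟪fderiv ℝ (gradient (Ψ y)) θ v, v⟫)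
    (θhat θhat1 : EuclideanSpace ℝ (Fin d))
    (hmin : IsMinOn (fun θ => ∑ i, Ψ (x i) θ) Set.univ θhat)
    (hmin1 : IsMinOn
      (fun θ => Ψ x' θ + ∑ i ∈ Finset.univ.erase (0 : Fin n), Ψ (x i) θ)
      Set.univ θhat1) :
    ‖θhat - θhat1‖ ≤
      (1 / (n * δ)) * ‖gradient (Ψ (x 0)) θhat1 - gradient (Ψ x') θhat1‖ := by
  have hmemx : ∀ i, x i ∈ Set.range x ∪ {x'} := fun i => Or.inl ⟨i, rfl⟩
  have hmemx' : x' ∈ Set.range x ∪ {x'} := Or.inr rfl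
  -- smoothness facts
  have hCx : ∀ i, ContDiff ℝ 2 (Ψ (x i)) := fun i => hsmooth _ (hmemx i)
  have hCx' : ContDiff ℝ 2 (Ψ x') := hsmooth _ hmemx'
  have hGx : ∀ i, ContDiff ℝ 1 (gradient (Ψ (x i))) :=
    fun i => contDiff_gradient_of_contDiff_two (hCx i)
  have hGx' : ContDiff ℝ 1 (gradient (Ψ x')) := contDiff_gradient_of_contDiff_two hCx'
  set f : EuclideanSpace ℝ (Fin d) → ℝ := fun θ => ∑ i, Ψ (x i) θ with hf
  -- gradient of f equals sum of gradients
  have hgradf : ∀ θ, gradient f θ = ∑ i, gradient (Ψ (x i)) θ := fun θ =>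
    gradient_sum _ _ _ (fun i _ => ((hCx i).differentiable two_ne_zero).differentiableAt)
  have hgradf_fun : gradient f = fun θ => ∑ i, gradient (Ψ (x i)) θ := funext hgradf
  -- gradient f θhat = 0
  have h0 : gradient f θhat = 0 := gradient_eq_zero_of_isMinOn hmin
  -- gradient of replaced risk at θhat1 is 0
  have h1 : gradient (Ψ x') θhat1
      + ∑ i ∈ Finset.univ.erase (0 : Fin n), gradient (Ψ (x i)) θhat1 = 0 := by
    have := gradient_eq_zero_of_isMinOn hmin1
    rwa [gradient_add _ _ _ ((hCx'.differentiable two_ne_zero).differentiableAt)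
      (DifferentiableAt.fun_sum fun i _ => ((hCx i).differentiable two_ne_zero).differentiableAt),
      gradient_sum _ _ _ (fun i _ => ((hCx i).differentiable two_ne_zero).differentiableAt)]
      at this
  -- gradient f θhat1 = D
  set D := gradient (Ψ (x 0)) θhat1 - gradient (Ψ x') θhat1 with hD
  have hfD : gradient f θhat1 = D := by
    rw [hgradf θhat1, ← Finset.add_sum_erase _ _ (Finset.mem_univ (0 : Fin n))]
    rw [eq_neg_of_add_eq_zero_right h1, hD]; abel
  -- strong monotonicity via 1-d mean value argument
  set u := θhat1 - θhat with hu
  set c : ℝ := (n : ℝ) * δ * ‖u‖ ^ 2 with hc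
  set γ := fun t : ℝ => θhat + t • u with hγ
  have hγd : ∀ t : ℝ, HasDerivAt γ u t := fun t => by
    have h := ((hasDerivAt_id t).smul_const u).const_add θhat
    simp only [id, one_smul] at h
    exact h
  have hgradf_diff : Differentiable ℝ (gradient f) := by
    rw [hgradf_fun]
    exact Differentiable.fun_sum fun i _ => (hGx i).differentiable one_ne_zero
  set φ : ℝ → ℝ := fun t => ⟪gradient f (γ t), u⟫ with hφ
  have hφd : ∀ t : ℝ, HasDerivAt φ ⟪fderiv ℝ (gradient f) (γ t) u, u⟫ t := by
    intro t
    have h2 : HasFDerivAt (gradient f) (fderiv ℝ (gradient f) (γ t)) (γ t) :=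
      (hgradf_diff (γ t)).hasFDerivAt
    have h3 : HasDerivAt (fun t => gradient f (γ t))
        (fderiv ℝ (gradient f) (γ t) u) t := h2.comp_hasDerivAt t (hγd t)
    have h4 := ((innerSL ℝ u).hasFDerivAt).comp_hasDerivAt t h3
    have heq : (⇑(innerSL ℝ u) ∘ fun t => gradient f (γ t)) = φ := by
      funext s
      simp only [Function.comp_apply, innerSL_apply_apply, φ]
      exact real_inner_comm _ _
    have hval : (innerSL ℝ u) ((fderiv ℝ (gradient f) (γ t)) u)
        = ⟪(fderiv ℝ (gradient f) (γ t)) u, u⟫ := by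
      simp only [innerSL_apply_apply]; exact real_inner_comm _ _
    rw [heq, hval] at h4
    exact h4
  have hderiv_lb : ∀ t : ℝ, c ≤ ⟪fderiv ℝ (gradient f) (γ t) u, u⟫ := by
    intro t
    have hfd : fderiv ℝ (gradient f) (γ t)
        = ∑ i, fderiv ℝ (gradient (Ψ (x i))) (γ t) := by
      rw [hgradf_fun]
      exact fderiv_fun_sum fun i _ => ((hGx i).differentiable one_ne_zero).differentiableAt
    rw [hfd]
    simp only [ContinuousLinearMap.sum_apply, sum_inner]
    calc c = ∑ _i : Fin n, δ * ‖u‖ ^ 2 := by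
            simp [hc]; ring
      _ ≤ _ := Finset.sum_le_sum fun i _ => hhess _ (hmemx i) (γ t) u
  -- φ 1 - φ 0 ≥ c
  have key : c ≤ φ 1 - φ 0 := by
    set χ : ℝ → ℝ := fun t => φ t - c * t with hχ
    have hχd : ∀ t : ℝ, HasDerivAt χ (⟪fderiv ℝ (gradient f) (γ t) u, u⟫ - c) t := by
      intro t
      have hlin : HasDerivAt (fun t : ℝ => c * t) c t := by
        simpa using (hasDerivAt_id t).const_mul c
      exact (hφd t).sub hlin
    have hmono : MonotoneOn χ (Set.Icc 0 1) := by
      apply monotoneOn_of_deriv_nonneg (convex_Icc 0 1)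
        (fun t _ => (hχd t).differentiableAt.continuousAt.continuousWithinAt)
        (fun t _ => (hχd t).differentiableAt.differentiableWithinAt)
      intro t _
      rw [(hχd t).deriv]
      linarith [hderiv_lb t]
    have := hmono (Set.mem_Icc.mpr ⟨le_refl 0, zero_le_one⟩)
      (Set.mem_Icc.mpr ⟨zero_le_one, le_refl 1⟩) zero_le_one
    simp only [hχ] at this
    linarith
  have hφ0 : φ 0 = 0 := by
    show ⟪gradient f (θhat + (0:ℝ) • u), u⟫ = 0
    rw [zero_smul, add_zero, h0, inner_zero_left]
  have hφ1 : φ 1 = ⟪D, u⟫ := by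
    show ⟪gradient f (θhat + (1:ℝ) • u), u⟫ = ⟪D, u⟫
    rw [one_smul, hu, add_sub_cancel, hfD]
  have hkey : (n : ℝ) * δ * ‖u‖ ^ 2 ≤ ⟪D, u⟫ := by
    rw [← hφ1]; rw [hφ0] at key; simpa [hc] using key
  have hCS : ⟪D, u⟫ ≤ ‖D‖ * ‖u‖ := real_inner_le_norm D u
  have hnd : (0 : ℝ) < (n : ℝ) * δ :=
    mul_pos (Nat.cast_pos.mpr (Nat.pos_of_ne_zero (NeZero.ne n))) hδ
  have hnorm : ‖θhat - θhat1‖ = ‖u‖ := by rw [hu, norm_sub_rev]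
  rw [hnorm, one_div, inv_mul_eq_div, le_div_iff₀ hnd]
  rcases eq_or_lt_of_le (norm_nonneg u) with h | h
  · rw [← h]; simp [norm_nonneg]
  · have : (n : ℝ) * δ * ‖u‖ ^ 2 ≤ ‖D‖ * ‖u‖ := hkey.trans hCS
    rw [pow_two] at this
    nlinarith
end

section
/- Let $Z \sim \mathrm{Unif}[0,1]$, let $\mu = \frac{1}{2}$, and suppose $Z_1, \dots, Z_n$ are i.i.d. uniform on $[0,1]$ with $n \ge 2$. Let $c_1 = \arg\min_{i \le n} |Z_i - \tfrac12|$ be the index of the closest point to $\tfrac12$. Then, for the nearest-neighbour classifier $f_n(z) = \mathbb{I}(Z_{c(z)} \le \tfrac12)$ where $c(z) = \arg\min_i |Z_i - z|$ and the true label $Y = \mathbb{I}(Z \le \tfrac12)$, the misclassification event $\{Y \ne f_n(Z)\}$ occurs (almost surely, given the sample has points on both sides of $\tfrac12$) if and only if $Z$ lies in the interval between $\tfrac12$ and the midpoint $\tfrac12(Z_{c_1^*} + Z_{c_2^*})$, where $Z_{c_1^*}$ is the closest sample point to $\tfrac12$ and $Z_{c_2^*}$ is the closest sample point to $\tfrac12$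 on the opposite side of $\tfrac12$ from $Z_{c_1^*}$. -/
set_option maxHeartbeats 2000000 in
/-- Error region of the 1-nearest-neighbour classifier in one dimension with labels
`Y = 𝕀(Z ≤ 1/2)`: for sample points `Z₁, …, Zₙ` in `[0,1]` having points on both sides of
`1/2`, if `c` is the (unique, strictly) nearest sample point to the query `z`, `c₁` the nearest
sample point to `1/2`, and `c₂` the nearest sample point to `1/2` on the opposite side of `1/2`
from `Z_{c₁}`, then the query is misclassified iff `z` lies in the interval between `1/2` and
the midpoint `(Z_{c₁} + Z_{c₂})/2`. -/
theorem nearest_neighbour_error_region {n : ℕ}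
    (Z : Fin n → ℝ) (hZ01 : ∀ i, Z i ∈ Set.Icc (0 : ℝ) 1)
    (z : ℝ) (hz01 : z ∈ Set.Icc (0 : ℝ) 1)
    (hboth : (∃ i, Z i ≤ 1 / 2) ∧ (∃ i, 1 / 2 < Z i))
    (c : Fin n) (hc : ∀ j, j ≠ c → |Z c - z| < |Z j - z|)
    (c₁ : Fin n) (hc₁ : ∀ j, j ≠ c₁ → |Z c₁ - 1 / 2| < |Z j - 1 / 2|)
    (c₂ : Fin n)
    (hc₂left : Z c₁ ≤ 1 / 2 →
      1 / 2 < Z c₂ ∧ ∀ j, 1 / 2 < Z j → |Z c₂ - 1 / 2| ≤ |Z j - 1 / 2|)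
    (hc₂right : 1 / 2 < Z c₁ →
      Z c₂ ≤ 1 / 2 ∧ ∀ j, Z j ≤ 1 / 2 → |Z c₂ - 1 / 2| ≤ |Z j - 1 / 2|) :
    (¬ ((z ≤ 1 / 2) ↔ (Z c ≤ 1 / 2))) ↔
      z ∈ Set.uIoc (1 / 2 : ℝ) ((Z c₁ + Z c₂) / 2) := by
  rcases le_or_gt (Z c₁) (1 / 2) with h1 | h1
  · obtain ⟨h2, h2min⟩ := hc₂left h1
    have hne12 : c₂ ≠ c₁ := fun h => by rw [h] at h2; linarith
    have hk : 1 / 2 - Z c₁ < Z c₂ - 1 / 2 := by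
      have h := hc₁ c₂ hne12
      rw [abs_of_nonpos (by linarith), abs_of_pos (by linarith)] at h
      linarith
    rw [Set.uIoc_of_le (by linarith : (1:ℝ)/2 ≤ (Z c₁ + Z c₂) / 2), Set.mem_Ioc]
    constructor
    · intro hmis
      rcases le_or_gt z (1 / 2) with hz | hz
      · exfalso
        have hZc : 1 / 2 < Z c := by
          by_contra h; push_neg at h; exact hmis ⟨fun _ => h, fun _ => hz⟩
        have hcc₁ : c ≠ c₁ := fun h => by rw [h] at hZc; linarith
        have ha := hc c₁ hcc₁.symm
        have hb := hc₁ c hcc₁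
        rcases abs_cases (Z c - z) with ⟨e1, s1⟩ | ⟨e1, s1⟩ <;>
          rcases abs_cases (Z c₁ - z) with ⟨e2, s2⟩ | ⟨e2, s2⟩ <;>
          rcases abs_cases (Z c - 1 / 2) with ⟨e3, s3⟩ | ⟨e3, s3⟩ <;>
          rcases abs_cases (Z c₁ - 1 / 2) with ⟨e4, s4⟩ | ⟨e4, s4⟩ <;>
          linarith
      · have hZc : Z c ≤ 1 / 2 := by
          by_contra h; push_neg at h
          exact hmis ⟨fun h' => by linarith, fun h' => by linarith⟩
        refine ⟨hz, ?_⟩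
        by_contra hzm; push_neg at hzm
        have hne : c ≠ c₂ := fun h => by rw [h] at hZc; linarith
        have ha := hc c₂ hne.symm
        have hZcc₁ : Z c ≤ Z c₁ := by
          rcases eq_or_ne c c₁ with h | h
          · rw [h]
          · have hb := hc₁ c h
            rw [abs_of_nonpos (by linarith), abs_of_nonpos (by linarith)] at hb
            linarith
        rcases abs_cases (Z c - z) with ⟨e1, s1⟩ | ⟨e1, s1⟩ <;>
          rcases abs_cases (Z c₂ - z) with ⟨e2, s2⟩ | ⟨e2, s2⟩ <;>
          linarith
    · rintro ⟨hz1, hz2⟩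
      have hZc : Z c ≤ 1 / 2 := by
        by_contra hzc; push_neg at hzc
        have hcc₁ : c ≠ c₁ := fun h => by rw [h] at hzc; linarith
        have ha := hc c₁ hcc₁.symm
        have hb := h2min c hzc
        rcases abs_cases (Z c - z) with ⟨e1, s1⟩ | ⟨e1, s1⟩ <;>
          rcases abs_cases (Z c₁ - z) with ⟨e2, s2⟩ | ⟨e2, s2⟩ <;>
          rcases abs_cases (Z c₂ - 1 / 2) with ⟨e3, s3⟩ | ⟨e3, s3⟩ <;>
          rcases abs_cases (Z c - 1 / 2) with ⟨e4, s4⟩ | ⟨e4, s4⟩ <;>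
          linarith
      intro h
      have := h.mpr hZc
      linarith
  · obtain ⟨h2, h2min⟩ := hc₂right h1
    have hne12 : c₂ ≠ c₁ := fun h => by rw [h] at h2; linarith
    have hk : Z c₁ - 1 / 2 < 1 / 2 - Z c₂ := by
      have h := hc₁ c₂ hne12
      rw [abs_of_pos (by linarith), abs_of_nonpos (by linarith)] at h
      linarith
    rw [Set.uIoc_of_ge (by linarith : (Z c₁ + Z c₂) / 2 ≤ (1:ℝ)/2), Set.mem_Ioc]
    constructor
    · intro hmis
      rcases le_or_gt z (1 / 2) with hz | hz
      · have hZc : 1 / 2 < Z c := by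
          by_contra h; push_neg at h; exact hmis ⟨fun _ => h, fun _ => hz⟩
        refine ⟨?_, hz⟩
        by_contra hzm; push_neg at hzm
        have hne : c ≠ c₂ := fun h => by rw [h] at hZc; linarith
        have ha := hc c₂ hne.symm
        have hZcc₁ : Z c₁ ≤ Z c := by
          rcases eq_or_ne c c₁ with h | h
          · rw [h]
          · have hb := hc₁ c h
            rw [abs_of_pos (by linarith), abs_of_pos (by linarith)] at hb
            linarith
        rcases abs_cases (Z c - z) with ⟨e1, s1⟩ | ⟨e1, s1⟩ <;>
          rcases abs_cases (Z c₂ - z) with ⟨e2, s2⟩ | ⟨e2, s2⟩ <;>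
          linarith
      · exfalso
        have hZc : Z c ≤ 1 / 2 := by
          by_contra h; push_neg at h
          exact hmis ⟨fun h' => by linarith, fun h' => by linarith⟩
        have hcc₁ : c ≠ c₁ := fun h => by rw [h] at hZc; linarith
        have ha := hc c₁ hcc₁.symm
        have hb := hc₁ c hcc₁
        rcases abs_cases (Z c - z) with ⟨e1, s1⟩ | ⟨e1, s1⟩ <;>
          rcases abs_cases (Z c₁ - z) with ⟨e2, s2⟩ | ⟨e2, s2⟩ <;>
          rcases abs_cases (Z c - 1 / 2) with ⟨e3, s3⟩ | ⟨e3, s3⟩ <;>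
          rcases abs_cases (Z c₁ - 1 / 2) with ⟨e4, s4⟩ | ⟨e4, s4⟩ <;>
          linarith
    · rintro ⟨hz1, hz2⟩
      have hZc : 1 / 2 < Z c := by
        by_contra hzc; push_neg at hzc
        have hcc₁ : c ≠ c₁ := fun h => by rw [h] at hzc; linarith
        have ha := hc c₁ hcc₁.symm
        have hb := h2min c hzc
        rcases abs_cases (Z c - z) with ⟨e1, s1⟩ | ⟨e1, s1⟩ <;>
          rcases abs_cases (Z c₁ - z) with ⟨e2, s2⟩ | ⟨e2, s2⟩ <;>
          rcases abs_cases (Z c₂ - 1 / 2) with ⟨e3, s3⟩ | ⟨e3, s3⟩ <;>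
          rcases abs_cases (Z c - 1 / 2) with ⟨e4, s4⟩ | ⟨e4, s4⟩ <;>
          linarith
      intro h
      have := h.mp hz2
      linarith
end
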